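/- Let A, B, C be linear endomorphisms of V with BA = 0, CB = 0, each self-adjoint or skew-adjoint, rank(A) ≥ 4 and rank(C) ≥ 4, and suppose R_A + εR_B + δR_C = 0 with ε, δ ∈ {−1,1}, using canonical builds. Then δ = −1 and C = A or C = −A. If moreover the chain complex is exact (Im A = ker B and Im B = ker C) and B is skew-adjoint, then A and C are invertible. -/

import Mathlib

set_option linter.unusedSectionVars false
set_option maxHeartbeats 1000000


open RealInnerProductSpace

variable {V : Type*} [NormedAddCommGroup V] [InnerProductSpace ℝ V] [FiniteDimensional ℝ V]

noncomputable def RS (A : V →ₗ[ℝ] V) (x y z w : V) : ℝ :=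
  ⟪A x, w⟫ * ⟪A y, z⟫ - ⟪A x, z⟫ * ⟪A y, w⟫

noncomputable def RL (A : V →ₗ[ℝ] V) (x y z w : V) : ℝ :=
  RS A x y z w - 2 * ⟪A x, y⟫ * ⟪A z, w⟫

def IsACT (R : V → V → V → V → ℝ) : Prop :=
  (∀ x y z w, R x y z w = -R y x z w) ∧
  (∀ x y z w, R x y z w = R z w x y) ∧
  (∀ x y z w, R x y z w + R z x y w + R y z x w = 0)

open Classical in
noncomputable def Rcanon (A : V →ₗ[ℝ] V) : V → V → V → V → ℝ :=
  if LinearMap.adjoint A = A then RS A else RL A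

lemma aux_finrank_span_single_le (u : V) :
    Module.finrank ℝ (Submodule.span ℝ ({u} : Set V)) ≤ 1 := by
  by_cases hu : u = 0
  · rw [hu, Submodule.span_zero_singleton]; simp
  · rw [finrank_span_singleton hu]

lemma aux_rank_le_one (A : V →ₗ[ℝ] V) (u : V)
    (h : ∀ x, ∃ a : ℝ, A x = a • u) :
    Module.finrank ℝ (LinearMap.range A) ≤ 1 := by
  have hle : LinearMap.range A ≤ Submodule.span ℝ {u} := by
    rintro _ ⟨x, rfl⟩
    obtain ⟨a, hab⟩ := h x
    rw [hab]
    exact Submodule.smul_mem _ _ (Submodule.subset_span rfl)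
  exact le_trans (Submodule.finrank_mono hle) (aux_finrank_span_single_le u)

lemma aux_exists_ne (A : V →ₗ[ℝ] V) (hA : A ≠ 0) : ∃ x, A x ≠ 0 := by
  by_contra hcon
  push_neg at hcon
  exact hA (LinearMap.ext fun x => by simp [hcon x])

lemma rank_le_one_of_RS_zero (A : V →ₗ[ℝ] V)
    (h : ∀ x y z w, RS A x y z w = 0) :
    Module.finrank ℝ (LinearMap.range A) ≤ 1 := by
  by_cases hA : A = 0
  · subst hA
    rw [LinearMap.range_zero, finrank_bot]
    omega
  · obtain ⟨x₀, hx₀⟩ := aux_exists_ne A hA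
    apply aux_rank_le_one A (A x₀)
    intro y
    refine ⟨⟪A y, A x₀⟫ / ⟪A x₀, A x₀⟫, ?_⟩
    apply ext_inner_right ℝ
    intro w
    have hv := h x₀ y (A x₀) w
    rw [RS] at hv
    have hne : ⟪A x₀, A x₀⟫ ≠ (0:ℝ) := fun h0 => hx₀ ((inner_self_eq_zero (𝕜 := ℝ)).mp h0)
    rw [real_inner_smul_left]
    field_simp
    linarith [hv]

lemma aux_L_mu (A C : V →ₗ[ℝ] V)
    (hrank : 2 ≤ Module.finrank ℝ (LinearMap.range A))
    (h : ∀ x, ∃ c : ℝ, C x = c • A x) :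
    ∃ μ : ℝ, ∀ x, C x = μ • A x := by
  have hA : A ≠ 0 := by
    rintro rfl
    rw [LinearMap.range_zero, finrank_bot] at hrank
    omega
  obtain ⟨x₀, hx₀⟩ := aux_exists_ne A hA
  obtain ⟨μ, hμ⟩ := h x₀
  have key : ∀ x, (∀ t : ℝ, A x ≠ t • A x₀) → C x = μ • A x := by
    intro x hx
    obtain ⟨c, hc⟩ := h x
    obtain ⟨e, he⟩ := h (x + x₀)
    have h1 : c • A x + μ • A x₀ = e • A x + e • A x₀ := by
      rw [← hc, ← hμ, ← map_add]
      rw [he, map_add, smul_add]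
    have hec : e = c := by
      by_contra hne
      apply hx ((e - μ) / (c - e))
      have h2 : (c - e) • A x = (e - μ) • A x₀ := by
        rw [sub_smul, sub_smul]
        rw [sub_eq_sub_iff_add_eq_add]
        linear_combination (norm := module) h1
      have hce : c - e ≠ 0 := fun hz => hne (by linarith [sub_eq_zero.mp hz])
      rw [div_eq_inv_mul, ← smul_smul, ← h2, smul_smul, inv_mul_cancel₀ hce, one_smul]
    rw [hec] at h1
    have h3 : (μ - c) • A x₀ = 0 := by
      rw [sub_smul]
      linear_combination (norm := module) h1
    have hmc : μ = c := by
      rcases smul_eq_zero.mp h3 with h | h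
      · linarith [sub_eq_zero.mp (by linarith : μ - c = (0:ℝ))]
      · exact absurd h hx₀
    rw [hc, hmc]
  obtain ⟨y₀, hy₀⟩ : ∃ y, ∀ t : ℝ, A y ≠ t • A x₀ := by
    by_contra hcon
    push_neg at hcon
    have := aux_rank_le_one A (A x₀) (fun y => by
      obtain ⟨t, ht⟩ := hcon y; exact ⟨t, ht⟩)
    omega
  refine ⟨μ, fun x => ?_⟩
  by_cases hx : ∃ t : ℝ, A x = t • A x₀
  · obtain ⟨t, ht⟩ := hx
    have h1 : ∀ s : ℝ, A (x + y₀) ≠ s • A x₀ := by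
      intro s hcon
      apply hy₀ (s - t)
      rw [map_add, ht] at hcon
      rw [sub_smul, ← hcon]
      abel
    have h2 := key _ h1
    have h3 := key y₀ hy₀
    have : C x = C (x + y₀) - C y₀ := by rw [map_add]; abel
    rw [this, h2, h3, map_add, smul_add]
    abel
  · push_neg at hx
    exact key x hx

lemma RS_vec (A : V →ₗ[ℝ] V) (x y z w : V) :
    RS A x y z w = ⟪⟪A y, z⟫ • A x - ⟪A x, z⟫ • A y, w⟫ := by
  simp only [RS, inner_sub_left, real_inner_smul_left]; ring

lemma aux_rank_le_two (A : V →ₗ[ℝ] V) (u v : V)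
    (h : ∀ x, ∃ a b : ℝ, A x = a • u + b • v) :
    Module.finrank ℝ (LinearMap.range A) ≤ 2 := by
  have hle : LinearMap.range A ≤ Submodule.span ℝ {u} ⊔ Submodule.span ℝ {v} := by
    rintro _ ⟨x, rfl⟩
    obtain ⟨a, b, hab⟩ := h x
    rw [hab]
    exact Submodule.add_mem _
      (Submodule.mem_sup_left (Submodule.smul_mem _ _ (Submodule.subset_span rfl)))
      (Submodule.mem_sup_right (Submodule.smul_mem _ _ (Submodule.subset_span rfl)))
  have h1 := aux_finrank_span_single_le u
  have h2 := aux_finrank_span_single_le v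
  have h3 := Submodule.finrank_sup_add_finrank_inf_eq (Submodule.span ℝ ({u} : Set V)) (Submodule.span ℝ ({v} : Set V))
  have h4 := Submodule.finrank_mono hle
  omega

lemma aux_smul_cancel {s t : ℝ} {v w : V} (hs : s ≠ 0) (h : s • v = t • w) :
    v = (s⁻¹ * t) • w := by
  rw [← smul_smul, ← h, smul_smul, inv_mul_cancel₀ hs, one_smul]

lemma aux_smul_eq {s : ℝ} {v w : V} (hs : s ≠ 0) (h : s • v = w) : v = s⁻¹ • w := by
  rw [← h, smul_smul, inv_mul_cancel₀ hs, one_smul]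

lemma aux_comb {β θ g1 g2 : ℝ} {v c1 c2 : V} (hβ : β ≠ 0)
    (h : β • v = θ • (g1 • c1 - g2 • c2)) : ∃ p q : ℝ, v = p • c1 + q • c2 := by
  refine ⟨β⁻¹ * (θ * g1), -(β⁻¹ * (θ * g2)), ?_⟩
  have h1 : v = β⁻¹ • (θ • (g1 • c1 - g2 • c2)) := by
    rw [← h, smul_smul, inv_mul_cancel₀ hβ, one_smul]
  rw [h1]
  module

lemma aux_L_SS (A C : V →ₗ[ℝ] V) (θ : ℝ) (hθ : θ = 1 ∨ θ = -1)
    (h : ∀ x y z w, RS A x y z w = θ * RS C x y z w)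
    (hrank : 3 ≤ Module.finrank ℝ (LinearMap.range A)) :
    θ = 1 ∧ ∃ μ : ℝ, (μ = 1 ∨ μ = -1) ∧ ∀ x, C x = μ • A x := by
  have hθ0 : θ ≠ 0 := by rcases hθ with rfl | rfl <;> norm_num
  have hvec : ∀ x y z, ⟪A y, z⟫ • A x - ⟪A x, z⟫ • A y
      = θ • (⟪C y, z⟫ • C x - ⟪C x, z⟫ • C y) := by
    intro x y z
    apply ext_inner_right ℝ
    intro w
    rw [← RS_vec, h, real_inner_smul_left, ← RS_vec]
  have hA : A ≠ 0 := by
    rintro rfl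
    rw [LinearMap.range_zero, finrank_bot] at hrank
    omega
  -- kernel of A is contained in kernel of C
  have hker : ∀ x, A x = 0 → C x = 0 := by
    intro x hx
    by_contra hCx
    have h1 : ∀ y z, ⟪C x, z⟫ • C y = ⟪C y, z⟫ • C x := by
      intro y z
      have hv := hvec x y z
      rw [hx] at hv
      simp only [inner_zero_left, smul_zero, zero_smul, sub_zero, zero_sub] at hv
      have hv2 : ⟪C y, z⟫ • C x - ⟪C x, z⟫ • C y = 0 := by
        rcases smul_eq_zero.mp hv.symm with h0 | h0
        · exact absurd h0 hθ0
        · exact h0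
      linear_combination (norm := module) hv2.symm
    have hCC : ⟪C x, C x⟫ ≠ (0:ℝ) := fun h0 => hCx ((inner_self_eq_zero (𝕜 := ℝ)).mp h0)
    have h2 : ∀ y, ∃ c : ℝ, C y = c • C x := by
      intro y
      exact ⟨⟪C x, C x⟫⁻¹ * ⟪C y, C x⟫, aux_smul_cancel hCC (h1 y (C x))⟩
    have hRSC : ∀ a b z w, RS C a b z w = 0 := by
      intro a b z w
      obtain ⟨ca, hca⟩ := h2 a
      obtain ⟨cb, hcb⟩ := h2 b
      rw [RS, hca, hcb]
      simp only [real_inner_smul_left]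
      ring
    have hRSA : ∀ a b z w, RS A a b z w = 0 := by
      intro a b z w
      rw [h, hRSC, mul_zero]
    have := rank_le_one_of_RS_zero A hRSA
    omega
  -- for any x, y with A-images "independent", C x lies in span {A x, A y}
  have getpq : ∀ x y, A x ≠ 0 → (∀ a : ℝ, A y ≠ a • A x) →
      ∃ a b : ℝ, C x = a • A x + b • A y := by
    intro x y hx hyx
    have hxx : ⟪A x, A x⟫ ≠ (0:ℝ) := fun h0 => hx ((inner_self_eq_zero (𝕜 := ℝ)).mp h0)
    -- z₁ : orthogonal to A x, not orthogonal to A y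
    set z₁ := ⟪A x, A x⟫ • A y - ⟪A y, A x⟫ • A x with hz₁def
    have hz₁x : ⟪A x, z₁⟫ = 0 := by
      simp only [hz₁def, inner_sub_right, real_inner_smul_right]
      rw [real_inner_comm (A x) (A y)]
      ring
    have hβ : ⟪A y, z₁⟫ ≠ 0 := by
      intro hβ0
      have hzz : ⟪z₁, z₁⟫ = (0:ℝ) := by
        conv_lhs => rw [hz₁def]
        rw [inner_sub_left, real_inner_smul_left, real_inner_smul_left, hz₁x, hβ0]
        ring
      have hz0 : ⟪A x, A x⟫ • A y - ⟪A y, A x⟫ • A x = 0 := by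
        rw [← hz₁def]; exact (inner_self_eq_zero (𝕜 := ℝ)).mp hzz
      exact hyx _ (aux_smul_cancel hxx (sub_eq_zero.mp hz0))
    have hv := hvec x y z₁
    rw [hz₁x, zero_smul, sub_zero] at hv
    obtain ⟨p, q, hpq⟩ := aux_comb hβ hv
    -- z₂ : orthogonal to A y, not orthogonal to A x
    set z₂ := ⟪A y, A y⟫ • A x - ⟪A x, A y⟫ • A y with hz₂def
    have hz₂y : ⟪A y, z₂⟫ = 0 := by
      simp only [hz₂def, inner_sub_right, real_inner_smul_right]
      rw [real_inner_comm (A y) (A x)]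
      ring
    have hβ₂ : ⟪A x, z₂⟫ ≠ 0 := by
      intro hβ0
      have hzz : ⟪z₂, z₂⟫ = (0:ℝ) := by
        conv_lhs => rw [hz₂def]
        rw [inner_sub_left, real_inner_smul_left, real_inner_smul_left, hz₂y, hβ0]
        ring
      have hz0 : ⟪A y, A y⟫ • A x - ⟪A x, A y⟫ • A y = 0 := by
        rw [← hz₂def]; exact (inner_self_eq_zero (𝕜 := ℝ)).mp hzz
      have hz0' : ⟪A y, A y⟫ • A x = ⟪A x, A y⟫ • A y := sub_eq_zero.mp hz0
      by_cases hxy : ⟪A x, A y⟫ = 0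
      · rw [hxy, zero_smul] at hz0'
        rcases smul_eq_zero.mp hz0' with h0 | h0
        · have : A y = 0 := (inner_self_eq_zero (𝕜 := ℝ)).mp h0
          exact hyx 0 (by rw [this, zero_smul])
        · exact hx h0
      · exact hyx _ (aux_smul_cancel hxy hz0'.symm)
    have hv₂ := hvec y x z₂
    rw [hz₂y, zero_smul, sub_zero] at hv₂
    obtain ⟨s, r, hsr⟩ := aux_comb hβ₂ hv₂
    -- hsr : A y = s • C y + r • C x
    set D := p * s - q * r with hDdef
    have e1 : s • A x - q • A y = D • C x := by
      rw [hpq, hsr, hDdef]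
      module
    have e2 : r • A x - p • A y = (-D) • C y := by
      rw [hpq, hsr, hDdef]
      module
    have hD : D ≠ 0 := by
      intro hD0
      rw [hD0, zero_smul] at e1
      rw [hD0, neg_zero, zero_smul] at e2
      have e1' : s • A x = q • A y := sub_eq_zero.mp e1
      have e2' : r • A x = p • A y := sub_eq_zero.mp e2
      have hq : q = 0 := by
        by_contra hq0
        exact hyx _ (aux_smul_cancel hq0 e1'.symm)
      have hp : p = 0 := by
        by_contra hp0
        exact hyx _ (aux_smul_cancel hp0 e2'.symm)
      rw [hp, hq, zero_smul, zero_smul, add_zero] at hpq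
      exact hx hpq
    refine ⟨D⁻¹ * s, -(D⁻¹ * q), ?_⟩
    have := aux_smul_eq hD e1.symm
    rw [this]
    module
  -- conclude : C x is always a multiple of A x
  have hCspan : ∀ x, ∃ c : ℝ, C x = c • A x := by
    intro x
    by_cases hx : A x = 0
    · exact ⟨0, by rw [hker x hx, zero_smul]⟩
    obtain ⟨y, hyx⟩ : ∃ y, ∀ a : ℝ, A y ≠ a • A x := by
      by_contra hcon
      push_neg at hcon
      have := aux_rank_le_one A (A x) hcon
      omega
    obtain ⟨y', hy'⟩ : ∃ y', ∀ a b : ℝ, A y' ≠ a • A x + b • A y := by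
      by_contra hcon
      push_neg at hcon
      have := aux_rank_le_two A (A x) (A y) hcon
      omega
    have hy'x : ∀ a : ℝ, A y' ≠ a • A x := by
      intro a hc
      exact hy' a 0 (by rw [hc, zero_smul, add_zero])
    obtain ⟨a, b, hab⟩ := getpq x y hx hyx
    obtain ⟨a', b', hab'⟩ := getpq x y' hx hy'x
    by_cases hb' : b' = 0
    · exact ⟨a', by rw [hab', hb', zero_smul, add_zero]⟩
    exfalso
    have heq : a • A x + b • A y = a' • A x + b' • A y' := by rw [← hab, ← hab']
    have h0 : b' • A y' = (a - a') • A x + b • A y := by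
      linear_combination (norm := module) heq.symm
    have := aux_smul_eq hb' h0
    apply hy' (b'⁻¹ * (a - a')) (b'⁻¹ * b)
    rw [this]
    module
  obtain ⟨μ, hmu⟩ := aux_L_mu A C (by omega) hCspan
  -- find a point where RS A is nonzero
  have hexists : ¬ (∀ x y z w, RS A x y z w = 0) := by
    intro hz
    have := rank_le_one_of_RS_zero A hz
    omega
  push_neg at hexists
  obtain ⟨x, y, z, w, hne⟩ := hexists
  have heq := h x y z w
  simp only [RS, hmu, real_inner_smul_left] at heq
  simp only [RS] at hne
  have hfac : (θ * μ^2 - 1) * (⟪A x, w⟫ * ⟪A y, z⟫ - ⟪A x, z⟫ * ⟪A y, w⟫) = 0 := by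
    linear_combination (-1 : ℝ) * heq
  have hθμ : θ * μ^2 = 1 := by
    rcases mul_eq_zero.mp hfac with h0 | h0
    · linarith
    · exact absurd h0 hne
  have hθ1 : θ = 1 := by
    rcases hθ with rfl | rfl
    · rfl
    · nlinarith [sq_nonneg μ]
  refine ⟨hθ1, μ, ?_, hmu⟩
  rw [hθ1, one_mul] at hθμ
  have : (μ - 1) * (μ + 1) = 0 := by linear_combination hθμ
  rcases mul_eq_zero.mp this with h0 | h0
  · left; linarith
  · right; linarith

lemma RL_vec (A : V →ₗ[ℝ] V) (x y z w : V) :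
    RL A x y z w = ⟪⟪A y, z⟫ • A x - ⟪A x, z⟫ • A y - (2 * ⟪A x, y⟫) • A z, w⟫ := by
  simp only [RL, RS, inner_sub_left, real_inner_smul_left]; ring

lemma aux_sym_of_adj (A : V →ₗ[ℝ] V) (hA : LinearMap.adjoint A = A) (x y : V) :
    ⟪A x, y⟫ = ⟪A y, x⟫ := by
  conv_lhs => rw [← hA]
  rw [LinearMap.adjoint_inner_left, real_inner_comm]

lemma aux_skew_of_adj (A : V →ₗ[ℝ] V) (hA : LinearMap.adjoint A = -A) (x y : V) :
    ⟪A x, y⟫ = -⟪A y, x⟫ := by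
  have h := LinearMap.adjoint_inner_left A x y
  rw [hA] at h
  simp only [LinearMap.neg_apply, inner_neg_left] at h
  have h2 := real_inner_comm y (A x)
  linarith

lemma aux_skew_diag (A : V →ₗ[ℝ] V) (hA : LinearMap.adjoint A = -A) (x : V) :
    ⟪A x, x⟫ = 0 := by
  have := aux_skew_of_adj A hA x x
  linarith

lemma aux_zero_of_all_inner_zero (A : V →ₗ[ℝ] V) (h : ∀ x y, ⟪A x, y⟫ = 0) : A = 0 := by
  apply LinearMap.ext
  intro x
  exact (inner_self_eq_zero (𝕜 := ℝ)).mp (h x (A x))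

lemma aux_L_mixed (A C : V →ₗ[ℝ] V) (hA : LinearMap.adjoint A = A)
    (hC : LinearMap.adjoint C = -C) (σ : ℝ)
    (h : ∀ x y z w, RS A x y z w = σ * RL C x y z w)
    (hrank : 3 ≤ Module.finrank ℝ (LinearMap.range A)) : False := by
  have fsym := aux_sym_of_adj A hA
  have gskew := aux_skew_of_adj C hC
  have gdiag := aux_skew_diag C hC
  have hQ : ∀ x y, ⟪A x, y⟫^2 - ⟪A x, x⟫ * ⟪A y, y⟫ = -3 * σ * ⟪C x, y⟫^2 := by
    intro x y
    have h0 := h x y x y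
    simp only [RS, RL] at h0
    rw [fsym y x, gskew y x, gdiag x] at h0
    linear_combination h0
  have hPol : ∀ x y z, ⟪A x, y⟫ * ⟪A x, z⟫ - ⟪A x, x⟫ * ⟪A y, z⟫
      = -3 * σ * ⟪C x, y⟫ * ⟪C x, z⟫ := by
    intro x y z
    have h1 := hQ x (y + z)
    have h2 := hQ x (y - z)
    simp only [map_add, map_sub, inner_add_left, inner_add_right, inner_sub_left,
      inner_sub_right] at h1 h2
    linear_combination h1/4 - h2/4 - (⟪A x, x⟫/2) * (fsym y z)
  have hdiag : ∃ x, ⟪A x, x⟫ ≠ 0 := by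
    by_contra hcon
    push_neg at hcon
    have hz : ∀ y z, ⟪A y, z⟫ = 0 := by
      intro y z
      have := hcon (y + z)
      simp only [map_add, inner_add_left, inner_add_right] at this
      rw [hcon y, hcon z, fsym z y] at this
      linarith
    have : A = 0 := aux_zero_of_all_inner_zero A hz
    rw [this, LinearMap.range_zero, finrank_bot] at hrank
    omega
  obtain ⟨x₀, hx₀⟩ := hdiag
  have hsp : ∀ y, ∃ a b : ℝ, A y = a • (A x₀) + b • (C x₀) := by
    intro y
    refine ⟨⟪A x₀, x₀⟫⁻¹ * ⟪A x₀, y⟫, ⟪A x₀, x₀⟫⁻¹ * (3 * σ * ⟪C x₀, y⟫), ?_⟩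
    apply ext_inner_right ℝ
    intro z
    rw [inner_add_left, real_inner_smul_left, real_inner_smul_left]
    have hp := hPol x₀ y z
    field_simp
    linear_combination (-1 : ℝ) * hp
  have := aux_rank_le_two A (A x₀) (C x₀) hsp
  omega

lemma aux_L_skew (A C : V →ₗ[ℝ] V) (hA : LinearMap.adjoint A = -A)
    (hC : LinearMap.adjoint C = -C) (δ : ℝ) (hδ : δ = 1 ∨ δ = -1)
    (h : ∀ x y z w, RL A x y z w = -δ * RL C x y z w)
    (hrank : 2 ≤ Module.finrank ℝ (LinearMap.range A)) :
    δ = -1 ∧ ∃ μ : ℝ, (μ = 1 ∨ μ = -1) ∧ ∀ x, C x = μ • A x := by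
  have hδ0 : δ ≠ 0 := by rcases hδ with rfl | rfl <;> norm_num
  have askew := aux_skew_of_adj A hA
  have adiag := aux_skew_diag A hA
  have cskew := aux_skew_of_adj C hC
  have cdiag := aux_skew_diag C hC
  have hAne : A ≠ 0 := by
    rintro rfl
    rw [LinearMap.range_zero, finrank_bot] at hrank
    omega
  -- the scalar identity
  have hQ : ∀ x y, 3 * ⟪A x, y⟫^2 = -δ * (3 * ⟪C x, y⟫^2) := by
    intro x y
    have h0 := h x y x y
    simp only [RL, RS] at h0
    rw [askew y x, adiag x, cskew y x, cdiag x] at h0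
    linear_combination -h0
  -- rule out δ = 1
  have hδm : δ = -1 := by
    rcases hδ with rfl | rfl
    · exfalso
      apply hAne
      apply aux_zero_of_all_inner_zero
      intro x y
      have := hQ x y
      nlinarith [sq_nonneg (⟪A x, y⟫ : ℝ), sq_nonneg (⟪C x, y⟫ : ℝ)]
    · rfl
  subst hδm
  -- vector identity
  have hvec : ∀ x y z, ⟪A y, z⟫ • A x - ⟪A x, z⟫ • A y - (2 * ⟪A x, y⟫) • A z
      = ⟪C y, z⟫ • C x - ⟪C x, z⟫ • C y - (2 * ⟪C x, y⟫) • C z := by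
    intro x y z
    apply ext_inner_right ℝ
    intro w
    rw [← RL_vec, h, ← RL_vec]
    norm_num
  have hkey : ∀ x y, ⟪A x, y⟫ • A x = ⟪C x, y⟫ • C x := by
    intro x y
    have e := hvec x y x
    rw [askew y x, adiag x, cskew y x, cdiag x] at e
    have e3 : (3:ℝ) • (⟪A x, y⟫ • A x) = (3:ℝ) • (⟪C x, y⟫ • C x) := by
      linear_combination (norm := module) -e
    have := smul_right_injective V (by norm_num : (3:ℝ) ≠ 0) e3
    exact this
  have hCspan : ∀ x, ∃ c : ℝ, C x = c • A x := by
    intro x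
    by_cases hx : A x = 0
    · refine ⟨0, ?_⟩
      have h0 := hkey x (C x)
      rw [hx, smul_zero] at h0
      rcases smul_eq_zero.mp h0.symm with h1 | h1
      · rw [zero_smul]
        exact (inner_self_eq_zero (𝕜 := ℝ)).mp h1
      · rw [zero_smul]; exact h1
    · have hxx : ⟪A x, A x⟫ ≠ (0:ℝ) := fun h0 => hx ((inner_self_eq_zero (𝕜 := ℝ)).mp h0)
      have h0 := hkey x (A x)
      have ht : ⟪C x, A x⟫ ≠ (0:ℝ) := by
        intro hz
        rw [hz, zero_smul] at h0
        rcases smul_eq_zero.mp h0 with h1 | h1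
        · exact hxx h1
        · exact hx h1
      exact ⟨⟪C x, A x⟫⁻¹ * ⟪A x, A x⟫, aux_smul_cancel ht h0.symm⟩
  obtain ⟨μ, hmu⟩ := aux_L_mu A C hrank hCspan
  refine ⟨rfl, μ, ?_, hmu⟩
  obtain ⟨x, hx⟩ := aux_exists_ne A hAne
  have hxx : ⟪A x, A x⟫ ≠ (0:ℝ) := fun h0 => hx ((inner_self_eq_zero (𝕜 := ℝ)).mp h0)
  have hq := hQ x (A x)
  rw [hmu x, real_inner_smul_left] at hq
  have : (μ - 1) * (μ + 1) * ⟪A x, A x⟫^2 = 0 := by linear_combination -hq/3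
  rcases mul_eq_zero.mp this with h0 | h0
  · rcases mul_eq_zero.mp h0 with h1 | h1
    · left; linarith
    · right; linarith
  · exact absurd (pow_eq_zero_iff (by norm_num) |>.mp h0) hxx

theorem stmt_13 (A B C : V →ₗ[ℝ] V)
    (hA : LinearMap.adjoint A = A ∨ LinearMap.adjoint A = -A)
    (hB : LinearMap.adjoint B = B ∨ LinearMap.adjoint B = -B)
    (hC : LinearMap.adjoint C = C ∨ LinearMap.adjoint C = -C)
    (hBA : B ∘ₗ A = 0) (hCB : C ∘ₗ B = 0)
    (hrankA : 4 ≤ Module.finrank ℝ (LinearMap.range A))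
    (hrankC : 4 ≤ Module.finrank ℝ (LinearMap.range C))
    (ε δ : ℝ) (hε : ε = 1 ∨ ε = -1) (hδ : δ = 1 ∨ δ = -1)
    (hsum : ∀ x y z w : V,
      Rcanon A x y z w + ε * Rcanon B x y z w + δ * Rcanon C x y z w = 0) :
    (δ = -1 ∧ (C = A ∨ C = -A)) ∧
    ((LinearMap.range A = LinearMap.ker B ∧ LinearMap.range B = LinearMap.ker C ∧
        LinearMap.adjoint B = -B) →
      Function.Bijective A ∧ Function.Bijective C) := by
  -- flip identities for the (anti-)selfadjoint operators
  have getflip : ∀ (X : V →ₗ[ℝ] V), (LinearMap.adjoint X = X ∨ LinearMap.adjoint X = -X) →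
      ∃ s : ℝ, (s = 1 ∨ s = -1) ∧ ∀ x y : V, ⟪x, X y⟫ = s * ⟪X x, y⟫ := by
    intro X hX
    rcases hX with h | h
    · refine ⟨1, Or.inl rfl, fun x y => ?_⟩
      rw [one_mul, real_inner_comm, aux_sym_of_adj X h y x]
    · refine ⟨-1, Or.inr rfl, fun x y => ?_⟩
      rw [real_inner_comm, aux_skew_of_adj X h y x]
      ring
  obtain ⟨a, ha1, haf⟩ := getflip A hA
  obtain ⟨b, hb1, hbf⟩ := getflip B hB
  obtain ⟨c, hc1, hcf⟩ := getflip C hC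
  have hBA0 : ∀ v, B (A v) = 0 := by
    intro v
    have := LinearMap.ext_iff.mp hBA v
    simpa using this
  have hCB0 : ∀ v, C (B v) = 0 := by
    intro v
    have := LinearMap.ext_iff.mp hCB v
    simpa using this
  have hAB0 : ∀ u, A (B u) = 0 := by
    intro u
    have hall : ∀ w, ⟪A (B u), w⟫ = 0 := by
      intro w
      have h1 := haf (B u) w
      have h2 := hbf (A w) u
      rw [hBA0 w] at h2
      simp only [inner_zero_left, mul_zero] at h2
      have h3 := real_inner_comm (B u) (A w)
      rcases ha1 with rfl | rfl <;> linarith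
    exact (inner_self_eq_zero (𝕜 := ℝ)).mp (hall (A (B u)))
  have horthA : ∀ x u, ⟪A x, B u⟫ = 0 := by
    intro x u
    have h2 := hbf (A x) u
    rw [hBA0 x] at h2
    simpa using h2
  have horthC : ∀ x u, ⟪C x, B u⟫ = 0 := by
    intro x u
    have h2 := hcf x (B u)
    rw [hCB0 u] at h2
    simp only [inner_zero_right] at h2
    rcases hc1 with rfl | rfl <;> linarith
  -- the orthogonal projection onto ker B
  set K := LinearMap.ker B with hKdef
  have hrangeB : Kᗮ = LinearMap.range B := by
    have hle : LinearMap.range B ≤ Kᗮ := by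
      rintro _ ⟨u, rfl⟩
      rw [Submodule.mem_orthogonal]
      intro k hk
      have h2 := hbf k u
      rw [LinearMap.mem_ker.mp hk] at h2
      simpa using h2
    have h1 := Submodule.finrank_add_finrank_orthogonal K
    have h2 := LinearMap.finrank_range_add_finrank_ker B
    rw [← hKdef] at h2
    exact (Submodule.eq_of_le_of_finrank_le hle (by omega)).symm
  set P : V → V := fun v => ((K.orthogonalProjectionOnto v : K) : V) with hPdef
  have hBP : ∀ v, B (P v) = 0 := fun v => LinearMap.mem_ker.mp (K.orthogonalProjectionOnto v).2
  have hPo : ∀ v, ∃ u, v - P v = B u := by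
    intro v
    have := Submodule.sub_starProjection_mem_orthogonal (K := K) v
    rw [hrangeB] at this
    obtain ⟨u, hu⟩ := this
    exact ⟨u, hu.symm⟩
  have hAP : ∀ v, A (P v) = A v := by
    intro v
    obtain ⟨u, hu⟩ := hPo v
    have : A (v - P v) = 0 := by rw [hu]; exact hAB0 u
    rw [map_sub] at this
    have := sub_eq_zero.mp this
    exact this.symm
  have hCP : ∀ v, C (P v) = C v := by
    intro v
    obtain ⟨u, hu⟩ := hPo v
    have : C (v - P v) = 0 := by rw [hu]; exact hCB0 u
    rw [map_sub] at this
    have := sub_eq_zero.mp this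
    exact this.symm
  have hIA : ∀ v w, ⟪A (P v), P w⟫ = ⟪A v, w⟫ := by
    intro v w
    rw [hAP]
    obtain ⟨u, hu⟩ := hPo w
    have hw : P w = w - B u := by rw [← hu]; abel
    rw [hw, inner_sub_right, horthA v u, sub_zero]
  have hIC : ∀ v w, ⟪C (P v), P w⟫ = ⟪C v, w⟫ := by
    intro v w
    rw [hCP]
    obtain ⟨u, hu⟩ := hPo w
    have hw : P w = w - B u := by rw [← hu]; abel
    rw [hw, inner_sub_right, horthC v u, sub_zero]
  have hRA : ∀ x y z w, Rcanon A (P x) (P y) (P z) (P w) = Rcanon A x y z w := by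
    intro x y z w
    unfold Rcanon
    split_ifs <;> simp only [RS, RL, hIA]
  have hRC : ∀ x y z w, Rcanon C (P x) (P y) (P z) (P w) = Rcanon C x y z w := by
    intro x y z w
    unfold Rcanon
    split_ifs <;> simp only [RS, RL, hIC]
  have hRB : ∀ x y z w, Rcanon B (P x) (P y) (P z) (P w) = 0 := by
    intro x y z w
    unfold Rcanon
    split_ifs <;> simp [RS, RL, hBP]
  have hAC : ∀ x y z w, Rcanon A x y z w = -δ * Rcanon C x y z w := by
    intro x y z w
    have h0 := hsum (P x) (P y) (P z) (P w)
    rw [hRA, hRB, hRC] at h0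
    linear_combination h0
  have hB0 : ∀ x y z w, Rcanon B x y z w = 0 := by
    intro x y z w
    have h0 := hsum x y z w
    have h1 : ε * Rcanon B x y z w = 0 := by
      linear_combination h0 - hAC x y z w
    rcases hε with rfl | rfl <;> linarith
  constructor
  · -- part 1
    by_cases hAs : LinearMap.adjoint A = A <;> by_cases hCs : LinearMap.adjoint C = C
    · -- both symmetric builds
      have hACr : ∀ x y z w, RS A x y z w = (-δ) * RS C x y z w := by
        intro x y z w
        have h0 := hAC x y z w
        unfold Rcanon at h0
        rw [if_pos hAs, if_pos hCs] at h0
        exact h0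
      obtain ⟨hθ1, μ, hμ, hmu⟩ := aux_L_SS A C (-δ)
        (by rcases hδ with rfl | rfl <;> norm_num) hACr (by omega)
      refine ⟨by linarith, ?_⟩
      rcases hμ with rfl | rfl
      · left; exact LinearMap.ext fun x => by rw [hmu x, one_smul]
      · right; exact LinearMap.ext fun x => by rw [hmu x]; simp
    · -- A symmetric build, C antisymmetric build : impossible
      exfalso
      have hCsk := hC.resolve_left hCs
      refine aux_L_mixed A C hAs hCsk (-δ) ?_ (by omega)
      intro x y z w
      have h0 := hAC x y z w
      unfold Rcanon at h0
      rw [if_pos hAs, if_neg hCs] at h0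
      exact h0
    · -- A antisymmetric build, C symmetric build : impossible
      exfalso
      have hAsk := hA.resolve_left hAs
      refine aux_L_mixed C A hCs hAsk (-δ) ?_ (by omega)
      intro x y z w
      have h0 := hAC x y z w
      unfold Rcanon at h0
      rw [if_neg hAs, if_pos hCs] at h0
      rcases hδ with rfl | rfl <;> linarith
    · -- both antisymmetric builds
      have hAsk := hA.resolve_left hAs
      have hCsk := hC.resolve_left hCs
      have hACr : ∀ x y z w, RL A x y z w = -δ * RL C x y z w := by
        intro x y z w
        have h0 := hAC x y z w
        unfold Rcanon at h0
        rw [if_neg hAs, if_neg hCs] at h0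
        exact h0
      obtain ⟨hδm, μ, hμ, hmu⟩ := aux_L_skew A C hAsk hCsk δ hδ hACr (by omega)
      refine ⟨hδm, ?_⟩
      rcases hμ with rfl | rfl
      · left; exact LinearMap.ext fun x => by rw [hmu x, one_smul]
      · right; exact LinearMap.ext fun x => by rw [hmu x]; simp
  · -- part 2
    rintro ⟨hrA, hrB, hBsk⟩
    have hBzero : B = 0 := by
      by_cases hBs : LinearMap.adjoint B = B
      · have hneg : B = -B := hBs.symm.trans hBsk
        have h2 : B + B = 0 := by nth_rewrite 2 [hneg]; simp
        have h3 : (2:ℝ) • B = 0 := by rw [two_smul]; exact h2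
        rcases smul_eq_zero.mp h3 with h4 | h4
        · norm_num at h4
        · exact h4
      · apply LinearMap.ext
        intro x
        have hinner : ∀ y, ⟪B x, y⟫ = 0 := by
          intro y
          have h1 := hB0 x y x y
          unfold Rcanon at h1
          rw [if_neg hBs] at h1
          simp only [RL, RS] at h1
          rw [aux_skew_of_adj B hBsk y x, aux_skew_diag B hBsk x] at h1
          nlinarith [sq_nonneg (⟪B x, y⟫ : ℝ)]
        simpa using (inner_self_eq_zero (𝕜 := ℝ)).mp (hinner (B x))
    subst hBzero
    rw [hKdef, LinearMap.ker_zero] at hrA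
    rw [LinearMap.range_zero] at hrB
    have hAsurj : Function.Surjective A := LinearMap.range_eq_top.mp hrA
    have hCinj : Function.Injective C := LinearMap.ker_eq_bot.mp hrB.symm
    exact ⟨⟨LinearMap.injective_iff_surjective.mpr hAsurj, hAsurj⟩,
           ⟨hCinj, LinearMap.injective_iff_surjective.mp hCinj⟩⟩
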